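/- Let σ: [0,∞) → (0,∞) be continuous, let q ≥ 1, and suppose t > 0 satisfies t < (2q · sup_{r≥0} σ(r))^{-1} with sup_{r≥0} σ(r) finite. If (G_r)_{0≤r≤t} is a measurable Gaussian process where G_r ~ N(0, σ(r)) for each r, then E[exp{q ∫_0^t G_r² dr}] ≤ (1/t) ∫_0^t (1 - 2qt·σ(r))^{-1/2} dr < ∞. -/

import Mathlib

open MeasureTheory ProbabilityTheory Real

lemma gaussian_sq_moment (v a : ℝ) (hv : 0 < v) (hav : 2 * a * v < 1) :
    ∫⁻ y, ENNReal.ofReal (Real.exp (a * y ^ 2)) ∂(gaussianReal 0 v.toNNReal)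
      = ENNReal.ofReal ((1 - 2 * a * v) ^ (-(1/2 : ℝ))) := by
  have hvne : v.toNNReal ≠ 0 := by
    simp only [ne_eq, Real.toNNReal_eq_zero, not_le]; exact hv
  have hvc : ((v.toNNReal : ℝ)) = v := Real.coe_toNNReal v hv.le
  set b : ℝ := 1 / (2 * v) - a with hb_def
  have hb : 0 < b := by
    rw [hb_def, sub_pos, lt_div_iff₀ (by linarith)]
    nlinarith
  have h2vb : 2 * v * b = 1 - 2 * a * v := by
    rw [hb_def]; field_simp
  have hpos : (0:ℝ) < 1 - 2 * a * v := by nlinarith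
  rw [gaussianReal_of_var_ne_zero _ hvne,
    lintegral_withDensity_eq_lintegral_mul _ (measurable_gaussianPDF _ _)
      (by measurability)]
  have hpt : ∀ y : ℝ, (gaussianPDF 0 v.toNNReal * fun y => ENNReal.ofReal (Real.exp (a * y ^ 2))) y
      = ENNReal.ofReal ((√(2 * π * v))⁻¹ * Real.exp (-b * y ^ 2)) := by
    intro y
    simp only [Pi.mul_apply, gaussianPDF, gaussianPDFReal, hvc]
    rw [← ENNReal.ofReal_mul (by positivity)]
    congr 1
    rw [mul_assoc, ← Real.exp_add]
    congr 1
    rw [hb_def]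
    field_simp
    ring
  rw [lintegral_congr hpt]
  have hint : Integrable (fun y : ℝ => (√(2 * π * v))⁻¹ * Real.exp (-b * y ^ 2)) :=
    (integrable_exp_neg_mul_sq hb).const_mul _
  rw [ofReal_integral_eq_lintegral_ofReal hint
    (Filter.Eventually.of_forall fun y => by positivity) |>.symm]
  congr 1
  rw [MeasureTheory.integral_const_mul, integral_gaussian]
  rw [Real.rpow_neg hpos.le, ← Real.sqrt_eq_rpow]
  rw [← Real.sqrt_inv (2 * π * v), ← Real.sqrt_inv (1 - 2 * a * v),
    ← Real.sqrt_mul (by positivity : (0:ℝ) ≤ (2 * π * v)⁻¹)]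
  congr 1
  rw [← h2vb]
  field_simp

lemma jensen_exp (f : ℝ → ℝ) (hf : Measurable f) (t c : ℝ) (ht : 0 < t) (hc : 0 < c) :
    ENNReal.ofReal (Real.exp (c * ∫ r in (0:ℝ)..t, f r ^ 2))
      ≤ ENNReal.ofReal (1/t)
          * ∫⁻ r in Set.Ioc 0 t, ENNReal.ofReal (Real.exp (c * t * f r ^ 2)) := by
  set ν : Measure ℝ := volume.restrict (Set.Ioc 0 t) with hν
  have hνuniv : ν Set.univ = ENNReal.ofReal t := by
    rw [hν, Measure.restrict_apply_univ, Real.volume_Ioc, sub_zero]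
  haveI : IsFiniteMeasure ν := ⟨by rw [hνuniv]; exact ENNReal.ofReal_lt_top⟩
  haveI : NeZero ν := ⟨by
    intro h
    rw [← Measure.measure_univ_eq_zero] at h  -- maybe wrong name
    rw [hνuniv] at h
    exact absurd h (by simp [ht, ht.le, ne_eq, ENNReal.ofReal_eq_zero, not_le])⟩
  have hmg : Measurable fun r => Real.exp (c * t * f r ^ 2) := by measurability
  by_cases hint : Integrable (fun r => Real.exp (c * t * f r ^ 2)) ν
  · -- Jensen
    have hf2 : Integrable (fun r => c * t * f r ^ 2) ν := by
      refine Integrable.mono' hint (by measurability) ?_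
      refine Filter.Eventually.of_forall fun r => ?_
      rw [Real.norm_eq_abs, abs_of_nonneg (by positivity)]
      exact (Real.add_one_le_exp _).trans' (by nlinarith [sq_nonneg (f r)])
    have hjen := ConvexOn.map_average_le (μ := ν) (f := fun r => c * t * f r ^ 2)
      convexOn_exp continuous_exp.continuousOn isClosed_univ
      (Filter.Eventually.of_forall fun _ => Set.mem_univ _) hf2 hint
    have havg1 : (⨍ r, c * t * f r ^ 2 ∂ν) = c * ∫ r in (0:ℝ)..t, f r ^ 2 := by
      rw [average_eq, measureReal_def, hνuniv, ENNReal.toReal_ofReal ht.le, smul_eq_mul,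
        intervalIntegral.integral_of_le ht.le,
        show (fun r => c * t * f r ^ 2) = fun r => (c * t) * f r ^ 2 from rfl,
        MeasureTheory.integral_const_mul]
      field_simp
      ring
    have havg2 : (⨍ r, Real.exp (c * t * f r ^ 2) ∂ν)
        = t⁻¹ * ∫ r, Real.exp (c * t * f r ^ 2) ∂ν := by
      rw [average_eq, measureReal_def, hνuniv, ENNReal.toReal_ofReal ht.le, smul_eq_mul]
    rw [havg1] at hjen
    calc ENNReal.ofReal (Real.exp (c * ∫ r in (0:ℝ)..t, f r ^ 2))
        ≤ ENNReal.ofReal (⨍ r, Real.exp (c * t * f r ^ 2) ∂ν) :=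
          ENNReal.ofReal_le_ofReal hjen
      _ = ENNReal.ofReal (1/t) * ENNReal.ofReal (∫ r, Real.exp (c * t * f r ^ 2) ∂ν) := by
          rw [havg2, ← ENNReal.ofReal_mul (by positivity), one_div]
      _ = ENNReal.ofReal (1/t) * ∫⁻ r, ENNReal.ofReal (Real.exp (c * t * f r ^ 2)) ∂ν := by
          rw [ofReal_integral_eq_lintegral_ofReal hint
            (Filter.Eventually.of_forall fun r => (Real.exp_pos _).le)]
  · have htop : ∫⁻ r, ENNReal.ofReal (Real.exp (c * t * f r ^ 2)) ∂ν = ⊤ := by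
      by_contra h
      exact hint ⟨hmg.aestronglyMeasurable,
        (hasFiniteIntegral_iff_ofReal (Filter.Eventually.of_forall fun r =>
          (Real.exp_pos _).le)).2 (lt_top_iff_ne_top.2 h)⟩
    rw [htop, ENNReal.mul_top (by simp [ENNReal.ofReal_eq_zero, not_le]; positivity)]
    exact le_top

theorem stmt4 {Ω : Type*} [MeasurableSpace Ω] (μ : Measure Ω) [IsProbabilityMeasure μ]
    (σ : ℝ → ℝ) (hσcont : Continuous σ) (hσpos : ∀ r, 0 < σ r)
    (q : ℝ) (hq : 1 ≤ q) (S : ℝ) (hS : ∀ r ≥ (0:ℝ), σ r ≤ S)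
    (t : ℝ) (ht : 0 < t) (htT : t < (2 * q * S)⁻¹)
    (G : ℝ → Ω → ℝ)
    (hmeas : Measurable (fun p : ℝ × Ω => G p.1 p.2))
    (hgauss : ∀ r, Measure.map (G r) μ = gaussianReal 0 (σ r).toNNReal) :
    (∫⁻ ω, ENNReal.ofReal (Real.exp (q * ∫ r in (0:ℝ)..t, (G r ω) ^ 2)) ∂μ)
      ≤ ENNReal.ofReal
          ((1 / t) * ∫ r in (0:ℝ)..t, (1 - 2 * q * t * σ r) ^ (-(1/2 : ℝ))) ∧
    (∫⁻ ω, ENNReal.ofReal (Real.exp (q * ∫ r in (0:ℝ)..t, (G r ω) ^ 2)) ∂μ) < ⊤ := by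
  have hq0 : (0:ℝ) < q := lt_of_lt_of_le one_pos hq
  have hS0 : (0:ℝ) < S := lt_of_lt_of_le (hσpos 0) (hS 0 le_rfl)
  have h2qS : (0:ℝ) < 2 * q * S := by positivity
  have htS : 2 * q * t * S < 1 := by
    calc 2 * q * t * S = t * (2 * q * S) := by ring
      _ < (2 * q * S)⁻¹ * (2 * q * S) := mul_lt_mul_of_pos_right htT h2qS
      _ = 1 := inv_mul_cancel₀ (ne_of_gt h2qS)
  have hvar : ∀ r ∈ Set.Ioc (0:ℝ) t, 2 * (q * t) * σ r < 1 := fun r hr => by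
    have h1 := hS r hr.1.le
    nlinarith [hσpos r]
  have hbasepos : ∀ r ∈ Set.Icc (0:ℝ) t, (0:ℝ) < 1 - 2 * q * t * σ r := fun r hr => by
    have h1 := hS r hr.1
    nlinarith [hσpos r]
  -- pointwise Jensen
  have key : ∀ ω, ENNReal.ofReal (Real.exp (q * ∫ r in (0:ℝ)..t, (G r ω) ^ 2))
      ≤ ENNReal.ofReal (1/t)
          * ∫⁻ r in Set.Ioc 0 t, ENNReal.ofReal (Real.exp (q * t * (G r ω) ^ 2)) :=
    fun ω => jensen_exp (fun r => G r ω)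
      (hmeas.comp (measurable_id.prodMk measurable_const)) t q ht hq0
  have main_le : (∫⁻ ω, ENNReal.ofReal (Real.exp (q * ∫ r in (0:ℝ)..t, (G r ω) ^ 2)) ∂μ)
      ≤ ENNReal.ofReal (1/t)
          * ∫⁻ ω, (∫⁻ r in Set.Ioc 0 t,
              ENNReal.ofReal (Real.exp (q * t * (G r ω) ^ 2))) ∂μ :=
    (lintegral_mono key).trans_eq (lintegral_const_mul' _ _ ENNReal.ofReal_ne_top)
  have hGswap : Measurable fun p : Ω × ℝ => G p.2 p.1 := hmeas.comp measurable_swap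
  have hF : Measurable fun p : Ω × ℝ => ENNReal.ofReal (Real.exp (q * t * G p.2 p.1 ^ 2)) :=
    ENNReal.measurable_ofReal.comp (Real.measurable_exp.comp
      ((hGswap.pow_const 2).const_mul (q * t)))
  have hswap : (∫⁻ ω, (∫⁻ r in Set.Ioc 0 t,
        ENNReal.ofReal (Real.exp (q * t * (G r ω) ^ 2))) ∂μ)
      = ∫⁻ r in Set.Ioc 0 t, ∫⁻ ω,
          ENNReal.ofReal (Real.exp (q * t * (G r ω) ^ 2)) ∂μ :=
    lintegral_lintegral_swap hF.aemeasurable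
  have hinner : ∀ r ∈ Set.Ioc (0:ℝ) t,
      (∫⁻ ω, ENNReal.ofReal (Real.exp (q * t * (G r ω) ^ 2)) ∂μ)
        = ENNReal.ofReal ((1 - 2 * q * t * σ r) ^ (-(1/2 : ℝ))) := by
    intro r hr
    have hGr : Measurable (G r) := hmeas.comp (measurable_const.prodMk measurable_id)
    have hg : Measurable fun y : ℝ => ENNReal.ofReal (Real.exp (q * t * y ^ 2)) := by
      measurability
    rw [← lintegral_map hg hGr, hgauss r,
      gaussian_sq_moment (σ r) (q * t) (hσpos r) (hvar r hr)]
    congr 2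
    ring
  have hcongr : (∫⁻ r in Set.Ioc 0 t, ∫⁻ ω,
        ENNReal.ofReal (Real.exp (q * t * (G r ω) ^ 2)) ∂μ)
      = ∫⁻ r in Set.Ioc 0 t, ENNReal.ofReal ((1 - 2 * q * t * σ r) ^ (-(1/2 : ℝ))) :=
    setLIntegral_congr_fun measurableSet_Ioc hinner
  have hcontOn : ContinuousOn (fun r => (1 - 2 * q * t * σ r) ^ (-(1/2 : ℝ)))
      (Set.Icc 0 t) :=
    ContinuousOn.rpow_const
      ((continuous_const.sub (continuous_const.mul hσcont)).continuousOn)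
      (fun r hr => Or.inl (ne_of_gt (hbasepos r hr)))
  have hInt : IntegrableOn (fun r => (1 - 2 * q * t * σ r) ^ (-(1/2 : ℝ)))
      (Set.Ioc 0 t) :=
    (hcontOn.integrableOn_Icc).mono_set Set.Ioc_subset_Icc_self
  have hnn : 0 ≤ᵐ[volume.restrict (Set.Ioc 0 t)]
      fun r => (1 - 2 * q * t * σ r) ^ (-(1/2 : ℝ)) :=
    (ae_restrict_iff' measurableSet_Ioc).2 (Filter.Eventually.of_forall fun r hr =>
      Real.rpow_nonneg (hbasepos r (Set.Ioc_subset_Icc_self hr)).le _)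
  have hlast : (∫⁻ r in Set.Ioc 0 t,
        ENNReal.ofReal ((1 - 2 * q * t * σ r) ^ (-(1/2 : ℝ))))
      = ENNReal.ofReal (∫ r in Set.Ioc 0 t, (1 - 2 * q * t * σ r) ^ (-(1/2 : ℝ))) :=
    (ofReal_integral_eq_lintegral_ofReal hInt hnn).symm
  have hfinal : (∫⁻ ω, ENNReal.ofReal (Real.exp (q * ∫ r in (0:ℝ)..t, (G r ω) ^ 2)) ∂μ)
      ≤ ENNReal.ofReal
          ((1 / t) * ∫ r in (0:ℝ)..t, (1 - 2 * q * t * σ r) ^ (-(1/2 : ℝ))) := by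
    refine main_le.trans_eq ?_
    rw [hswap, hcongr, hlast, ← ENNReal.ofReal_mul (by positivity),
      intervalIntegral.integral_of_le ht.le]
  exact ⟨hfinal, hfinal.trans_lt ENNReal.ofReal_lt_top⟩
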